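/- Let X and X̂ be random variables, each nonnegative almost surely, whose distributions are atomless (their cumulative distribution functions F and F̂ are continuous), and set δ = sup_{y ∈ [0, ∞)} |F̂(y) − F(y)|. Let ā > 0 and let g : ℝ → ℝ be continuously differentiable on [0, ā] with |g(y)| ≤ M and |g'(y)| ≤ K for all y ∈ [0, ā]. Then for every a ∈ [0, ā], |E[g(X̂) · 1{X̂ < a}] − E[g(X) · 1{X < a}]| ≤ (2M + K·a)·δ ≤ (2M + K·ā)·δ. -/

import Mathlib

open MeasureTheory Filter Set Topology

private lemma aux_iUnion_Iic (x : ℝ) :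
    (⋃ n : ℕ, Iic (x - ((n : ℝ) + 1)⁻¹)) = Iio x := by
  ext y
  simp only [mem_iUnion, mem_Iic, mem_Iio]
  constructor
  · rintro ⟨n, hn⟩
    have h : (0:ℝ) < ((n : ℝ) + 1)⁻¹ := by positivity
    linarith
  · intro h
    obtain ⟨n, hn⟩ := exists_nat_one_div_lt (sub_pos.mpr h)
    rw [one_div] at hn
    exact ⟨n, by linarith⟩

private lemma aux_Iio_toReal (ρ : Measure ℝ) [IsProbabilityMeasure ρ]
    (G : ℝ → ℝ) (hG : ∀ y, G y = (ρ (Iic y)).toReal) (hGc : Continuous G) (x : ℝ) :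
    (ρ (Iio x)).toReal = G x := by
  have hmono : Monotone fun n : ℕ => Iic (x - ((n : ℝ) + 1)⁻¹) := by
    intro n m hnm
    apply Iic_subset_Iic.mpr
    have h1 : ((m : ℝ) + 1)⁻¹ ≤ ((n : ℝ) + 1)⁻¹ := by
      apply inv_anti₀ (by positivity)
      exact_mod_cast Nat.succ_le_succ hnm
    linarith
  have h1 : Tendsto (fun n : ℕ => ρ (Iic (x - ((n : ℝ) + 1)⁻¹))) atTop (𝓝 (ρ (Iio x))) := by
    rw [← aux_iUnion_Iic x]
    exact tendsto_measure_iUnion_atTop hmono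
  have h2 : Tendsto (fun n : ℕ => (ρ (Iic (x - ((n : ℝ) + 1)⁻¹))).toReal) atTop
      (𝓝 (ρ (Iio x)).toReal) :=
    (ENNReal.tendsto_toReal (measure_ne_top ρ _)).comp h1
  have h3 : Tendsto (fun n : ℕ => G (x - ((n : ℝ) + 1)⁻¹)) atTop (𝓝 (G x)) := by
    apply (hGc.tendsto x).comp
    have : Tendsto (fun n : ℕ => ((n : ℝ) + 1)⁻¹) atTop (𝓝 0) := by
      simpa [one_div] using tendsto_one_div_add_atTop_nhds_zero_nat (𝕜 := ℝ)
    simpa using tendsto_const_nhds.sub this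
  have h4 : (fun n : ℕ => (ρ (Iic (x - ((n : ℝ) + 1)⁻¹))).toReal)
      = fun n : ℕ => G (x - ((n : ℝ) + 1)⁻¹) := by
    funext n; rw [hG]
  rw [h4] at h2
  exact tendsto_nhds_unique h2 h3

private lemma key_repr (ρ : Measure ℝ) [IsProbabilityMeasure ρ] (hρ0 : ρ (Iio 0) = 0)
    (G : ℝ → ℝ) (hG : ∀ y, G y = (ρ (Iic y)).toReal) (hGc : Continuous G)
    (abar : ℝ) (g h : ℝ → ℝ)
    (hgc : ContinuousOn g (Icc 0 abar)) (hhc : ContinuousOn h (Icc 0 abar))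
    (hftc : ∀ y ∈ Icc (0:ℝ) abar, g y = g 0 + ∫ t in (0:ℝ)..y, h t)
    (a : ℝ) (ha0 : 0 ≤ a) (haa : a ≤ abar) :
    ∫ y, (Iio a).indicator g y ∂ρ
      = g a * G a - ∫ t in Ioc 0 a, h t * G t := by
  have hIio : ∀ x, (ρ (Iio x)).toReal = G x := aux_Iio_toReal ρ G hG hGc
  have hIoc_sub : Ioc 0 a ⊆ Icc 0 abar := fun t ht => ⟨le_of_lt ht.1, ht.2.trans haa⟩
  have hIco_sub : Ico 0 a ⊆ Icc 0 abar := fun t ht => ⟨ht.1, ht.2.le.trans haa⟩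
  have hsm : MeasurableSet (Ico (0:ℝ) a) := measurableSet_Ico
  have hum : MeasurableSet (Ioc (0:ℝ) a) := measurableSet_Ioc
  -- Iio a =ᵐ[ρ] Ico 0 a
  have hset : Iio a =ᵐ[ρ] Ico 0 a := by
    rw [MeasureTheory.ae_eq_set]
    constructor
    · apply measure_mono_null _ hρ0
      intro y hy
      simp only [mem_diff, mem_Iio, mem_Ico, not_and, not_lt] at hy ⊢
      by_contra hc
      push_neg at hc
      exact absurd (hy.2 hc) (not_le.mpr hy.1)
    · have : Ico 0 a \ Iio a = ∅ := by
        ext y; simp only [mem_diff, mem_Ico, mem_Iio, mem_empty_iff_false, iff_false]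
        tauto
      simp [this]
  have hIcoG : (ρ (Ico 0 a)).toReal = G a := by
    rw [← measure_congr hset, hIio]
  -- bound on h
  obtain ⟨C, hC⟩ := (isCompact_Icc (a := (0:ℝ)) (b := abar)).exists_bound_of_continuousOn hhc
  -- the primitive
  set p : ℝ → ℝ := fun y => ∫ t in (0:ℝ)..y, h t with hp
  have hIabar : Icc (0:ℝ) abar = uIcc 0 abar := by
    rw [uIcc_of_le (ha0.trans haa)]
  have hhint : IntegrableOn h (Icc 0 abar) := hhc.integrableOn_compact isCompact_Icc
  have hpc : ContinuousOn p (Icc 0 abar) := by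
    rw [hIabar]
    exact intervalIntegral.continuousOn_primitive_interval (hIabar ▸ hhint)
  have hpint : IntegrableOn p (Ico 0 a) ρ := by
    obtain ⟨D, hD⟩ := (isCompact_Icc (a := (0:ℝ)) (b := abar)).exists_bound_of_continuousOn hpc
    apply Integrable.mono' (integrable_const D)
      ((hpc.mono hIco_sub).aestronglyMeasurable hsm)
    filter_upwards [ae_restrict_mem hsm] with y hy using hD y (hIco_sub hy)
  -- step 1 : reduce to set integral over Ico 0 a
  rw [integral_indicator measurableSet_Iio, setIntegral_congr_set hset,
    setIntegral_congr_fun hsm (fun y hy => hftc y (hIco_sub hy)),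
    integral_add (integrable_const _) hpint, setIntegral_const, smul_eq_mul]
  -- Fubini setup
  haveI : IsFiniteMeasure (volume.restrict (Ioc (0:ℝ) a)) :=
    ⟨by rw [Measure.restrict_apply_univ, Real.volume_Ioc]; exact ENNReal.ofReal_lt_top⟩
  set F2 : ℝ × ℝ → ℝ := {q : ℝ × ℝ | q.2 ≤ q.1}.indicator (fun q => h q.2) with hF2
  set f : ℝ → ℝ → ℝ := fun y t => F2 (y, t) with hf
  have hprod : (ρ.restrict (Ico 0 a)).prod (volume.restrict (Ioc 0 a))
      = (ρ.prod volume).restrict ((Ico 0 a) ×ˢ (Ioc 0 a)) := Measure.prod_restrict _ _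
  have hasm : AEStronglyMeasurable (fun q : ℝ × ℝ => h q.2)
      ((ρ.restrict (Ico 0 a)).prod (volume.restrict (Ioc 0 a))) := by
    rw [hprod]
    exact (hhc.comp continuous_snd.continuousOn
      (fun q hq => hIoc_sub hq.2)).aestronglyMeasurable (hsm.prod hum)
  have hmeas_le : MeasurableSet {q : ℝ × ℝ | q.2 ≤ q.1} :=
    (isClosed_le continuous_snd continuous_fst).measurableSet
  have hintF2 : Integrable F2 ((ρ.restrict (Ico 0 a)).prod (volume.restrict (Ioc 0 a))) := by
    apply Integrable.mono' (integrable_const C) (hasm.indicator hmeas_le)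
    have hmem : ∀ᵐ q ∂((ρ.restrict (Ico 0 a)).prod (volume.restrict (Ioc 0 a))),
        q ∈ (Ico 0 a) ×ˢ (Ioc 0 a) := by
      rw [hprod]; exact ae_restrict_mem (hsm.prod hum)
    filter_upwards [hmem] with q hq
    calc ‖F2 q‖ ≤ ‖h q.2‖ := norm_indicator_le_norm_self _ _
      _ ≤ C := hC _ (hIoc_sub hq.2)
  have hswap : ∫ y in Ico 0 a, (∫ t in Ioc 0 a, f y t) ∂ρ
      = ∫ t in Ioc 0 a, (∫ y in Ico 0 a, f y t ∂ρ) := by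
    apply MeasureTheory.integral_integral_swap
    exact hintF2
  -- left inner integrals
  have hleft : ∀ y ∈ Ico (0:ℝ) a, (∫ t in Ioc 0 a, f y t) = p y := by
    intro y hy
    have h1 : (fun t => f y t) = (Iic y).indicator h := by
      funext t
      simp only [hf, hF2, Set.indicator, mem_setOf_eq, mem_Iic]
    rw [h1, setIntegral_indicator measurableSet_Iic]
    have h2 : Ioc 0 a ∩ Iic y = Ioc 0 y := by
      rw [Set.Ioc_inter_Iic, min_eq_right hy.2.le]
    rw [h2]
    simp only [hp]
    rw [intervalIntegral.integral_of_le hy.1]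
  -- right inner integrals
  have hIcoG' : ∀ t ∈ Ioc (0:ℝ) a, (ρ (Ico t a)).toReal = G a - G t := by
    intro t ht
    have h1 : Ico t a = Iio a \ Iio t := by
      ext y
      simp only [mem_Ico, mem_diff, mem_Iio, not_lt]
      tauto
    rw [h1, measure_diff (Iio_subset_Iio ht.2)
        measurableSet_Iio.nullMeasurableSet (measure_ne_top ρ _),
      ENNReal.toReal_sub_of_le (measure_mono (Iio_subset_Iio ht.2)) (measure_ne_top ρ _),
      hIio, hIio]
  have hright : ∀ t ∈ Ioc (0:ℝ) a, (∫ y in Ico 0 a, f y t ∂ρ) = h t * (G a - G t) := by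
    intro t ht
    have h1 : (fun y => f y t) = (Ici t).indicator (fun _ => h t) := by
      funext y
      simp only [hf, hF2, Set.indicator, mem_setOf_eq, mem_Ici]
    rw [h1, integral_indicator_const _ measurableSet_Ici,
      measureReal_restrict_apply measurableSet_Ici]
    have h2 : Ici t ∩ Ico 0 a = Ico t a := by
      ext y
      simp only [mem_inter_iff, mem_Ici, mem_Ico]
      constructor
      · rintro ⟨h3, _, h5⟩; exact ⟨h3, h5⟩
      · rintro ⟨h3, h4⟩; exact ⟨h3, ht.1.le.trans h3, h4⟩
    rw [h2, measureReal_def, hIcoG' t ht, smul_eq_mul, mul_comm]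
  -- combine
  have e1 : ∫ y in Ico 0 a, p y ∂ρ = ∫ t in Ioc 0 a, h t * (G a - G t) := by
    rw [← setIntegral_congr_fun hsm hleft, hswap, setIntegral_congr_fun hum hright]
  -- split the right-hand integral
  have hi1 : IntegrableOn (fun t => h t * G a) (Ioc 0 a) :=
    ((hhc.mul continuousOn_const).integrableOn_compact isCompact_Icc).mono_set hIoc_sub
  have hi2 : IntegrableOn (fun t => h t * G t) (Ioc 0 a) :=
    ((hhc.mul hGc.continuousOn).integrableOn_compact isCompact_Icc).mono_set hIoc_sub
  have e2 : ∫ t in Ioc 0 a, h t * (G a - G t)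
      = (∫ t in Ioc 0 a, h t) * G a - ∫ t in Ioc 0 a, h t * G t := by
    have : (fun t => h t * (G a - G t)) = fun t => h t * G a - h t * G t := by
      funext t; ring
    rw [this, integral_sub hi1 hi2, integral_mul_const]
  have e3 : (∫ t in Ioc 0 a, h t) = g a - g 0 := by
    have := hftc a ⟨ha0, haa⟩
    rw [intervalIntegral.integral_of_le ha0] at this
    linarith
  rw [e1, e2, e3, measureReal_def, hIcoG]
  ring

theorem truncated_expectation_bound
    (μ ν : ProbabilityMeasure ℝ)
    (hμ0 : (μ : Measure ℝ) (Set.Iio 0) = 0)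
    (hν0 : (ν : Measure ℝ) (Set.Iio 0) = 0)
    (F Fhat : ℝ → ℝ)
    (hF : ∀ y, F y = ((μ : Measure ℝ) (Set.Iic y)).toReal)
    (hFhat : ∀ y, Fhat y = ((ν : Measure ℝ) (Set.Iic y)).toReal)
    (hFc : Continuous F) (hFhatc : Continuous Fhat)
    (δ : ℝ) (hδ : δ = ⨆ y : Set.Ici (0 : ℝ), |Fhat y - F y|)
    (abar M K : ℝ) (habar : 0 < abar)
    (g : ℝ → ℝ) (hg : ContDiffOn ℝ 1 g (Set.Icc 0 abar))
    (hgM : ∀ y ∈ Set.Icc (0 : ℝ) abar, |g y| ≤ M)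
    (hgK : ∀ y ∈ Set.Icc (0 : ℝ) abar, |derivWithin g (Set.Icc 0 abar) y| ≤ K) :
    ∀ a ∈ Set.Icc (0 : ℝ) abar,
      |(∫ y, (Set.Iio a).indicator g y ∂(ν : Measure ℝ))
          - ∫ y, (Set.Iio a).indicator g y ∂(μ : Measure ℝ)| ≤ (2 * M + K * a) * δ
      ∧ (2 * M + K * a) * δ ≤ (2 * M + K * abar) * δ := by
  intro a ha
  obtain ⟨ha0, haa⟩ := ha
  set h : ℝ → ℝ := derivWithin g (Set.Icc 0 abar) with hh
  have hudiff : UniqueDiffOn ℝ (Icc (0:ℝ) abar) := uniqueDiffOn_Icc habar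
  have hgc : ContinuousOn g (Icc 0 abar) := hg.continuousOn
  have hhc : ContinuousOn h (Icc 0 abar) := hg.continuousOn_derivWithin hudiff le_rfl
  have hM0 : 0 ≤ M := le_trans (abs_nonneg _) (hgM 0 ⟨le_rfl, habar.le⟩)
  have hK0 : 0 ≤ K := le_trans (abs_nonneg _) (hgK 0 ⟨le_rfl, habar.le⟩)
  -- δ facts
  have hF1 : ∀ y : ℝ, |F y| ≤ 1 := by
    intro y
    rw [hF, abs_of_nonneg ENNReal.toReal_nonneg]
    exact ENNReal.toReal_le_of_le_ofReal zero_le_one (by simpa using prob_le_one)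
  have hFhat1 : ∀ y : ℝ, |Fhat y| ≤ 1 := by
    intro y
    rw [hFhat, abs_of_nonneg ENNReal.toReal_nonneg]
    exact ENNReal.toReal_le_of_le_ofReal zero_le_one (by simpa using prob_le_one)
  have hbdd : BddAbove (Set.range fun y : Set.Ici (0:ℝ) => |Fhat y - F y|) := by
    refine ⟨2, ?_⟩
    rintro x ⟨y, rfl⟩
    calc |Fhat y - F y| ≤ |Fhat (y:ℝ)| + |F (y:ℝ)| := abs_sub _ _
      _ ≤ 1 + 1 := add_le_add (hFhat1 _) (hF1 _)
      _ = 2 := by norm_num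
  have hδle : ∀ y : ℝ, 0 ≤ y → |Fhat y - F y| ≤ δ := by
    intro y hy
    rw [hδ]
    exact le_ciSup hbdd (⟨y, hy⟩ : Set.Ici (0:ℝ))
  have hδ0 : 0 ≤ δ := le_trans (abs_nonneg _) (hδle 0 le_rfl)
  -- FTC
  have hftc : ∀ y ∈ Icc (0:ℝ) abar, g y = g 0 + ∫ t in (0:ℝ)..y, h t := by
    intro y hy
    have hsub : Icc (0:ℝ) y ⊆ Icc 0 abar := Icc_subset_Icc le_rfl hy.2
    have heq : ∫ t in (0:ℝ)..y, h t = g y - g 0 := by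
      apply intervalIntegral.integral_eq_sub_of_hasDeriv_right_of_le hy.1
        (hgc.mono hsub)
      · intro t ht
        have htmem : t ∈ Ioo (0:ℝ) abar := ⟨ht.1, lt_of_lt_of_le ht.2 hy.2⟩
        have hd : HasDerivWithinAt g (h t) (Icc 0 abar) t :=
          (hg.differentiableOn one_ne_zero t ⟨htmem.1.le, htmem.2.le⟩).hasDerivWithinAt
        exact (hd.hasDerivAt (Icc_mem_nhds htmem.1 htmem.2)).hasDerivWithinAt
      · exact (hhc.mono hsub).intervalIntegrable_of_Icc hy.1
    linarith [heq]
  -- key representation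
  have hν := key_repr (ν : Measure ℝ) hν0 Fhat hFhat hFhatc abar g h hgc hhc hftc a ha0 haa
  have hμ' := key_repr (μ : Measure ℝ) hμ0 F hF hFc abar g h hgc hhc hftc a ha0 haa
  rw [hν, hμ']
  have hIoc_sub : Ioc 0 a ⊆ Icc 0 abar := fun t ht => ⟨le_of_lt ht.1, ht.2.trans haa⟩
  have hint1 : IntegrableOn (fun t => h t * Fhat t) (Ioc 0 a) :=
    ((hhc.mul hFhatc.continuousOn).integrableOn_compact isCompact_Icc).mono_set hIoc_sub
  have hint2 : IntegrableOn (fun t => h t * F t) (Ioc 0 a) :=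
    ((hhc.mul hFc.continuousOn).integrableOn_compact isCompact_Icc).mono_set hIoc_sub
  have hdiff : (g a * Fhat a - ∫ t in Ioc 0 a, h t * Fhat t)
      - (g a * F a - ∫ t in Ioc 0 a, h t * F t)
      = g a * (Fhat a - F a) - ∫ t in Ioc 0 a, (h t * Fhat t - h t * F t) := by
    rw [integral_sub hint1 hint2]; ring
  rw [hdiff]
  constructor
  · have hb1 : |g a * (Fhat a - F a)| ≤ M * δ := by
      rw [abs_mul]
      exact mul_le_mul (hgM a ⟨ha0, haa⟩) (hδle a ha0) (abs_nonneg _) hM0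
    have hb2 : |∫ t in Ioc 0 a, (h t * Fhat t - h t * F t)| ≤ K * δ * a := by
      have hvol : (volume (Ioc (0:ℝ) a)) < ⊤ := by
        rw [Real.volume_Ioc]; exact ENNReal.ofReal_lt_top
      have hbound := norm_setIntegral_le_of_norm_le_const (C := K * δ) hvol
        (f := fun t => h t * Fhat t - h t * F t) ?_
      · rw [Real.norm_eq_abs] at hbound
        calc |∫ t in Ioc 0 a, (h t * Fhat t - h t * F t)| ≤ K * δ * (volume (Ioc (0:ℝ) a)).toReal :=
            hbound
          _ = K * δ * a := by rw [Real.volume_Ioc, sub_zero, ENNReal.toReal_ofReal ha0]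
      · intro t ht
        show ‖h t * Fhat t - h t * F t‖ ≤ K * δ
        have h1 : h t * Fhat t - h t * F t = h t * (Fhat t - F t) := by ring
        rw [Real.norm_eq_abs, h1, abs_mul]
        exact mul_le_mul (hgK t (hIoc_sub ht)) (hδle t ht.1.le) (abs_nonneg _) hK0
    calc |g a * (Fhat a - F a) - ∫ t in Ioc 0 a, (h t * Fhat t - h t * F t)|
        ≤ |g a * (Fhat a - F a)| + |∫ t in Ioc 0 a, (h t * Fhat t - h t * F t)| := abs_sub _ _
      _ ≤ M * δ + K * δ * a := add_le_add hb1 hb2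
      _ ≤ (2 * M + K * a) * δ := by nlinarith [mul_nonneg hM0 hδ0]
  · apply mul_le_mul_of_nonneg_right _ hδ0
    have := mul_le_mul_of_nonneg_left haa hK0
    linarith
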